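/- Let W be any subset of the 16 vertices range v ∪ range (fun i => −v i) of the seven-dimensional diplo-simplex and let P = convexHull ℝ W. Then every vertex of P fails to be joined by an edge to at most one other vertex: for all pairwise distinct x, y, z ∈ W, at least one of the segments from x to y and from x to z is a face of P, i.e. IsExtreme ℝ P (segment ℝ x y) or IsExtreme ℝ P (segment ℝ x z) holds. -/

import Mathlib

open Set FiniteDimensional

lemma exists_functional (v : Fin 8 → EuclideanSpace ℝ (Fin 7)) (hv : AffineIndependent ℝ v)
    (hsum : ∑ i, v i = 0) (c : Fin 8 → ℝ) (hc : ∑ i, c i = 0) :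
    ∃ f : EuclideanSpace ℝ (Fin 7) →ₗ[ℝ] ℝ, ∀ i, f (v i) = c i := by
  have hli : LinearIndependent ℝ (fun i : {x : Fin 8 // x ≠ 0} => v i - v 0) := by
    have := (affineIndependent_iff_linearIndependent_vsub ℝ v 0).mp hv
    simpa [vsub_eq_sub] using this
  have hcard : Fintype.card {x : Fin 8 // x ≠ 0} = Module.finrank ℝ (EuclideanSpace ℝ (Fin 7)) := by
    simp [finrank_euclideanSpace]
  haveI : Nonempty {x : Fin 8 // x ≠ 0} := ⟨⟨1, by decide⟩⟩
  let b := basisOfLinearIndependentOfCardEqFinrank hli hcard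
  have hb : ∀ i : {x : Fin 8 // x ≠ 0}, b i = v i - v 0 := fun i => by
    simp [b, coe_basisOfLinearIndependentOfCardEqFinrank]
  refine ⟨b.constr ℝ (fun i => c i - c 0), ?_⟩
  set f := b.constr ℝ (fun i => c i - c 0) with hfdef
  have hf : ∀ i : {x : Fin 8 // x ≠ 0}, f (v i - v 0) = c i - c 0 := fun i => by
    rw [← hb]; exact b.constr_basis ℝ _ i
  have hdiff : ∀ i : Fin 8, f (v i) - c i = f (v 0) - c 0 := by
    intro i
    by_cases h : i = 0
    · subst h; ring
    · have h2 := hf ⟨i, h⟩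
      rw [map_sub] at h2
      simp only at h2
      linarith
  have h1 : ∑ i : Fin 8, (f (v i) - c i) = ∑ _i : Fin 8, (f (v 0) - c 0) :=
    Finset.sum_congr rfl (fun i _ => hdiff i)
  rw [Finset.sum_sub_distrib, ← map_sum, hsum, map_zero, hc, Finset.sum_const] at h1
  simp only [Finset.card_univ, Fintype.card_fin, nsmul_eq_mul, Nat.cast_ofNat] at h1
  have h0 : f (v 0) = c 0 := by linarith
  intro i
  have := hdiff i
  linarith

lemma seg_isExtreme {E : Type*} [AddCommGroup E] [Module ℝ E]
    (f : E →ₗ[ℝ] ℝ) (W : Set E) (x y : E) (hx : x ∈ W) (hy : y ∈ W)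
    (hfx : f x = 1) (hfy : f y = 1) (hle : ∀ w ∈ W, f w ≤ 1)
    (heq : ∀ w ∈ W, f w = 1 → w = x ∨ w = y) :
    IsExtreme ℝ (convexHull ℝ W) (segment ℝ x y) := by
  have hsub : segment ℝ x y ⊆ convexHull ℝ W := by
    rw [← convexHull_pair]
    exact convexHull_mono (by rintro w (rfl | rfl) <;> assumption)
  have hhull_le : ∀ q ∈ convexHull ℝ W, f q ≤ 1 := by
    intro q hq
    exact convexHull_min (s := W) (t := f ⁻¹' Set.Iic 1) hle
      ((convex_Iic (1:ℝ)).linear_preimage f) hq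
  have hface : ∀ q ∈ convexHull ℝ W, f q = 1 → q ∈ segment ℝ x y := by
    intro q hq hq1
    rw [convexHull_eq] at hq
    obtain ⟨ι, t, w, z, hw0, hw1, hzW, rfl⟩ := hq
    rw [Finset.centerMass_eq_of_sum_1 _ _ hw1] at hq1 ⊢
    have hfz : ∀ i ∈ t, f (z i) ≤ 1 := fun i hi => hle _ (hzW i hi)
    have hsum0 : ∑ i ∈ t, w i * (1 - f (z i)) = 0 := by
      have hmap : f (∑ i ∈ t, w i • z i) = ∑ i ∈ t, w i * f (z i) := by
        rw [map_sum]; exact Finset.sum_congr rfl fun i _ => by rw [map_smul, smul_eq_mul]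
      rw [hmap] at hq1
      calc ∑ i ∈ t, w i * (1 - f (z i)) = (∑ i ∈ t, w i) - ∑ i ∈ t, w i * f (z i) := by
            rw [← Finset.sum_sub_distrib]; exact Finset.sum_congr rfl fun i _ => by ring
        _ = 0 := by rw [hw1, hq1]; ring
    have hzero : ∀ i ∈ t, w i * (1 - f (z i)) = 0 :=
      (Finset.sum_eq_zero_iff_of_nonneg
        (fun i hi => mul_nonneg (hw0 i hi) (by linarith [hfz i hi]))).mp hsum0
    set z' : ι → E := fun i => if w i = 0 then x else z i with hz'
    have hzz : ∑ i ∈ t, w i • z i = ∑ i ∈ t, w i • z' i := Finset.sum_congr rfl fun i hi => by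
      by_cases h : w i = 0
      · simp [h]
      · simp [hz', h]
    rw [hzz, ← convexHull_pair, ← Finset.centerMass_eq_of_sum_1 _ _ hw1]
    apply Finset.centerMass_mem_convexHull
    · exact hw0
    · rw [hw1]; norm_num
    · intro i hi
      by_cases h : w i = 0
      · simp [hz', h]
      · have h1 : f (z i) = 1 := by
          rcases mul_eq_zero.mp (hzero i hi) with h' | h'
          · exact absurd h' h
          · linarith
        rcases heq _ (hzW i hi) h1 with h' | h' <;> simp [hz', h, h']
  refine ⟨hsub, ?_⟩
  intro x₁ hx₁ x₂ hx₂ p hpseg hpopen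
  obtain ⟨a, b, ha, hb, hab, rfl⟩ := hpopen
  have hfp : f (a • x₁ + b • x₂) = 1 := by
    obtain ⟨s, u, hs, hu, hsu, hp⟩ := hpseg
    rw [← hp, map_add, map_smul, map_smul, smul_eq_mul, smul_eq_mul, hfx, hfy]
    linarith
  rw [map_add, map_smul, map_smul, smul_eq_mul, smul_eq_mul] at hfp
  have h1 : f x₁ ≤ 1 := hhull_le _ hx₁
  have h2 : f x₂ ≤ 1 := hhull_le _ hx₂
  have e1 : f x₁ = 1 := by nlinarith
  have e2 : f x₂ = 1 := by nlinarith
  exact hface _ hx₁ e1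

section Edges

variable (v : Fin 8 → EuclideanSpace ℝ (Fin 7)) (hv : AffineIndependent ℝ v)
  (hsum : ∑ i, v i = 0) (W : Set (EuclideanSpace ℝ (Fin 7)))
  (hW : W ⊆ range v ∪ range (fun i => -v i))

include hv hsum hW

lemma edge_vv (i j : Fin 8) (hij : i ≠ j) (hvi : v i ∈ W) (hvj : v j ∈ W) :
    IsExtreme ℝ (convexHull ℝ W) (segment ℝ (v i) (v j)) := by
  obtain ⟨f, hf⟩ := exists_functional v hv hsum
    (fun k => (4/3 : ℝ) * (if k = i then 1 else 0) + (4/3) * (if k = j then 1 else 0) - 1/3)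
    (by
      rw [Finset.sum_sub_distrib, Finset.sum_add_distrib, ← Finset.mul_sum, ← Finset.mul_sum]
      simp only [Finset.sum_ite_eq', Finset.mem_univ, if_true, Finset.sum_const,
        Finset.card_univ, Fintype.card_fin, nsmul_eq_mul]
      norm_num)
  apply seg_isExtreme f W _ _ hvi hvj
  · rw [hf i, if_pos rfl, if_neg hij]; norm_num
  · rw [hf j, if_neg (Ne.symm hij), if_pos rfl]; norm_num
  · intro w hw
    rcases hW hw with ⟨k, rfl⟩ | ⟨k, rfl⟩
    · rw [hf k]
      split_ifs with h1 h2 <;> first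
        | exact absurd (h1.symm.trans h2) hij
        | norm_num
    · show f (-v k) ≤ 1
      rw [map_neg, hf k]
      split_ifs <;> norm_num
  · intro w hw hw1
    rcases hW hw with ⟨k, rfl⟩ | ⟨k, rfl⟩
    · rw [hf k] at hw1
      split_ifs at hw1 with h1 h2
      · exact absurd (h1.symm.trans h2) hij
      · exact Or.inl (by rw [h1])
      · rename_i h2
        exact Or.inr (by rw [h2])
      · norm_num at hw1
    · rw [show f ((fun i => -v i) k) = -f (v k) from map_neg f (v k), hf k] at hw1
      split_ifs at hw1 <;> norm_num at hw1

lemma edge_vm (i j : Fin 8) (hij : i ≠ j) (hvi : v i ∈ W) (hvj : -v j ∈ W) :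
    IsExtreme ℝ (convexHull ℝ W) (segment ℝ (v i) (-v j)) := by
  obtain ⟨f, hf⟩ := exists_functional v hv hsum
    (fun k => (if k = i then (1:ℝ) else 0) - (if k = j then 1 else 0))
    (by rw [Finset.sum_sub_distrib]; simp [Finset.sum_ite_eq'])
  apply seg_isExtreme f W _ _ hvi hvj
  · rw [hf i, if_pos rfl, if_neg hij]; norm_num
  · rw [map_neg, hf j, if_neg (Ne.symm hij), if_pos rfl]; norm_num
  · intro w hw
    rcases hW hw with ⟨k, rfl⟩ | ⟨k, rfl⟩
    · rw [hf k]; split_ifs <;> norm_num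
    · show f (-v k) ≤ 1
      rw [map_neg, hf k]; split_ifs <;> norm_num
  · intro w hw hw1
    rcases hW hw with ⟨k, rfl⟩ | ⟨k, rfl⟩
    · rw [hf k] at hw1
      split_ifs at hw1 with h1 h2
      · norm_num at hw1
      · exact Or.inl (by rw [h1])
      · norm_num at hw1
      · norm_num at hw1
    · rw [show f ((fun i => -v i) k) = -f (v k) from map_neg f (v k), hf k] at hw1
      split_ifs at hw1 with h1 h2
      · norm_num at hw1
      · norm_num at hw1
      · rename_i h2
        exact Or.inr (by show -v k = -v j; rw [h2])
      · norm_num at hw1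

lemma edge_mm (i j : Fin 8) (hij : i ≠ j) (hvi : -v i ∈ W) (hvj : -v j ∈ W) :
    IsExtreme ℝ (convexHull ℝ W) (segment ℝ (-v i) (-v j)) := by
  obtain ⟨f, hf⟩ := exists_functional v hv hsum
    (fun k => (1/3 : ℝ) - (4/3) * (if k = i then 1 else 0) - (4/3) * (if k = j then 1 else 0))
    (by
      rw [Finset.sum_sub_distrib, Finset.sum_sub_distrib, ← Finset.mul_sum, ← Finset.mul_sum]
      simp only [Finset.sum_ite_eq', Finset.mem_univ, if_true, Finset.sum_const,
        Finset.card_univ, Fintype.card_fin, nsmul_eq_mul]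
      norm_num)
  apply seg_isExtreme f W _ _ hvi hvj
  · rw [map_neg, hf i, if_pos rfl, if_neg hij]; norm_num
  · rw [map_neg, hf j, if_neg (Ne.symm hij), if_pos rfl]; norm_num
  · intro w hw
    rcases hW hw with ⟨k, rfl⟩ | ⟨k, rfl⟩
    · rw [hf k]; split_ifs <;> norm_num
    · show f (-v k) ≤ 1
      rw [map_neg, hf k]
      split_ifs with h1 h2 <;> first
        | exact absurd (h1.symm.trans h2) hij
        | norm_num
  · intro w hw hw1
    rcases hW hw with ⟨k, rfl⟩ | ⟨k, rfl⟩
    · rw [hf k] at hw1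
      split_ifs at hw1 <;> norm_num at hw1
    · rw [show f ((fun i => -v i) k) = -f (v k) from map_neg f (v k), hf k] at hw1
      split_ifs at hw1 with h1 h2
      · exact absurd (h1.symm.trans h2) hij
      · exact Or.inl (by show -v k = -v i; rw [h1])
      · rename_i h2
        exact Or.inr (by show -v k = -v j; rw [h2])
      · norm_num at hw1

lemma edge_of_ne (x y : EuclideanSpace ℝ (Fin 7)) (hx : x ∈ W) (hy : y ∈ W)
    (hxy : x ≠ y) (hxny : x ≠ -y) :
    IsExtreme ℝ (convexHull ℝ W) (segment ℝ x y) := by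
  rcases hW hx with ⟨i, rfl⟩ | ⟨i, rfl⟩ <;> rcases hW hy with ⟨j, rfl⟩ | ⟨j, rfl⟩
  · exact edge_vv v hv hsum W hW i j (fun h => hxy (by rw [h])) hx hy
  · have hij : i ≠ j := by
      intro h; subst h
      exact hxny (by simp)
    exact edge_vm v hv hsum W hW i j hij hx hy
  · have hij : j ≠ i := by
      intro h; subst h
      exact hxny (by simp)
    have := edge_vm v hv hsum W hW j i hij hy hx
    rwa [segment_symm] at this
  · have hij : i ≠ j := by
      intro h; subst h
      exact hxy rfl
    exact edge_mm v hv hsum W hW i j hij hx hy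

end Edges

open Set in
/-- For any subset `W` of the 16 vertices of the seven-dimensional diplo-simplex
(the Delone polytope of `E7*`) and `P = convexHull ℝ W`, every vertex of `P` fails to be
joined by an edge to at most one other vertex: for pairwise distinct `x, y, z ∈ W`,
at least one of the segments `[x, y]` and `[x, z]` is a face of `P`. -/
theorem stmt_14
    (v : Fin 8 → EuclideanSpace ℝ (Fin 7))
    (hv : AffineIndependent ℝ v)
    (hsum : ∑ i, v i = 0)
    (W : Set (EuclideanSpace ℝ (Fin 7)))
    (hW : W ⊆ range v ∪ range (fun i => -v i))
    (P : Set (EuclideanSpace ℝ (Fin 7)))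
    (hP : P = convexHull ℝ W) :
    ∀ x ∈ W, ∀ y ∈ W, ∀ z ∈ W, x ≠ y → x ≠ z → y ≠ z →
      IsExtreme ℝ P (segment ℝ x y) ∨ IsExtreme ℝ P (segment ℝ x z) := by
  subst hP
  intro x hx y hy z hz hxy hxz hyz
  by_cases h : x = -y
  · right
    apply edge_of_ne v hv hsum W hW x z hx hz hxz
    intro h'
    exact hyz (neg_injective (h ▸ h'))
  · left
    exact edge_of_ne v hv hsum W hW x y hx hy hxy h
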